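/- (Spike-count bound for a multi-spike EF neuron, dynamics form.) Let E be an integer, T ≥ 1 a natural number, and V₀ a real number with 2^{E−(T−1)} ≤ V₀ < 2^{E+1}. Define the multi-spike EF dynamics u : ℕ → ℝ and s : ℕ → Bool by u 0 = V₀, s k = (u k ≥ 2^E), and u (k+1) = 2 · (u k − (if s k then 2^E else 0)). Then the number of indices k with 0 ≤ k ≤ T−1 and s k = true is at most ⌊log₂ V₀⌋ − E + T, where ⌊log₂ V₀⌋ denotes Int.log 2 V₀ (i.e., the cardinality, viewed as an integer, is ≤ Int.log 2 V₀ − (E − (T−1)) + 1). -/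

import Mathlib

/-- Spike-count bound for a multi-spike EF neuron, dynamics form: with
`2^(E−(T−1)) ≤ V₀ < 2^(E+1)`, the number of spikes fired during the time
window `{0, …, T−1}` is at most `⌊log₂ V₀⌋ − (E − (T−1)) + 1`. -/
theorem multi_spike_EF_spike_count_bound
    (E : ℤ) (T : ℕ) (hT : 1 ≤ T) (V₀ : ℝ)
    (h1 : (2:ℝ)^(E - ((T:ℤ) - 1)) ≤ V₀) (h2 : V₀ < (2:ℝ)^(E+1))
    (u : ℕ → ℝ) (s : ℕ → Bool)
    (hu0 : u 0 = V₀)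
    (hs : ∀ k, s k = true ↔ (2:ℝ)^E ≤ u k)
    (hu : ∀ k, u (k+1) = 2 * (u k - (if s k then (2:ℝ)^E else 0))) :
    ((((Finset.range T).filter (fun k => s k = true)).card : ℤ))
      ≤ Int.log 2 V₀ - (E - ((T:ℤ) - 1)) + 1 := by
  set N : ℕ → ℕ := fun k => ((Finset.range k).filter (fun j => s j = true)).card with hN
  have hpos : (0:ℝ) < V₀ := lt_of_lt_of_le (zpow_pos two_pos _) h1
  have hupos : ∀ k, 0 ≤ u k := by
    intro k
    induction k with
    | zero => rw [hu0]; exact hpos.le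
    | succ k ih =>
      rw [hu k]
      by_cases hsk : s k = true
      · have := (hs k).mp hsk
        simp only [hsk, if_true]
        linarith
      · rw [if_neg hsk]
        linarith
  have hNsucc : ∀ k, N (k+1) = N k + (if s k = true then 1 else 0) := by
    intro k
    by_cases hsk : s k = true <;>
      simp [hN, Finset.range_add_one, Finset.filter_insert, hsk]
  have key : ∀ k, (2:ℝ)^E * ((2:ℝ)^(N k + 1) - 2) ≤ 2^k * V₀ - u k := by
    intro k
    induction k with
    | zero => simp [hN, hu0]
    | succ k ih =>
      have hE : (0:ℝ) < (2:ℝ)^E := zpow_pos two_pos _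
      have hB : (1:ℝ) ≤ (2:ℝ)^(N k) := one_le_pow₀ (by norm_num)
      by_cases hsk : s k = true
      · rw [hNsucc k, if_pos hsk, hu k]
        simp only [hsk, if_true]
        have h2e := (hs k).mp hsk
        have e1 : (2:ℝ)^(N k + 1 + 1) = 2 * (2:ℝ)^(N k + 1) := by ring
        have e2 : (2:ℝ)^(k + 1) = 2 * (2:ℝ)^k := by ring
        rw [e1, e2]
        nlinarith [ih]
      · rw [hNsucc k, if_neg hsk, hu k, if_neg hsk]
        have e2 : (2:ℝ)^(k + 1) = 2 * (2:ℝ)^k := by ring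
        have hB1 : (2:ℝ) ≤ (2:ℝ)^(N k + 1) := by
          calc (2:ℝ) = 2 * 1 := by ring
          _ ≤ 2 * (2:ℝ)^(N k) := by linarith
          _ = (2:ℝ)^(N k + 1) := by ring
        rw [e2]
        nlinarith [ih]
  have hlog1 : E - ((T:ℤ) - 1) ≤ Int.log 2 V₀ :=
    (Int.zpow_le_iff_le_log (by norm_num) hpos).mp (by exact_mod_cast h1)
  rcases Nat.eq_zero_or_pos (N T) with h0 | hNpos
  · show ((N T : ℤ)) ≤ _
    rw [h0]
    push_cast
    omega
  · have hkey := key T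
    have huT := hupos T
    have hE : (0:ℝ) < (2:ℝ)^E := zpow_pos two_pos _
    have hB : (2:ℝ)^1 ≤ (2:ℝ)^(N T) := pow_le_pow_right₀ (by norm_num) hNpos
    have hsum : (2:ℝ)^E * (2:ℝ)^(N T) ≤ 2^T * V₀ := by
      have e1 : (2:ℝ)^(N T + 1) = 2 * (2:ℝ)^(N T) := by ring
      rw [e1] at hkey
      nlinarith [mul_nonneg hE.le (by linarith : (0:ℝ) ≤ (2:ℝ)^(N T) - 2)]
    have hzpow : (2:ℝ)^(E + (N T : ℤ) - (T:ℤ)) ≤ V₀ := by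
      have hT2 : (0:ℝ) < (2:ℝ)^(T:ℤ) := zpow_pos two_pos _
      rw [← mul_le_mul_iff_left₀ hT2, ← zpow_add₀ (by norm_num : (2:ℝ) ≠ 0)]
      have he : E + (N T : ℤ) - (T:ℤ) + (T:ℤ) = E + (N T : ℤ) := by ring
      rw [he, zpow_add₀ (by norm_num : (2:ℝ) ≠ 0), zpow_natCast]
      calc (2:ℝ)^E * (2:ℝ)^(N T) ≤ 2^T * V₀ := hsum
        _ = V₀ * (2:ℝ)^(T:ℤ) := by rw [zpow_natCast]; ring
    have hlog2 : E + (N T : ℤ) - (T:ℤ) ≤ Int.log 2 V₀ :=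
      (Int.zpow_le_iff_le_log (by norm_num) hpos).mp (by exact_mod_cast hzpow)
    show ((N T : ℤ)) ≤ _
    omega
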